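/- Suppose η > F₁ + F₂. Then for any measurable switching signal σ : [0,∞) → {1,2,3,4} and any continuous X : [0,∞) → [0,∞)² with X(t) = X(0) + ∫₀ᵗ G(σ(τ), X(τ)) dτ for all t ≥ 0, one has X₁(t) + X₂(t) ≥ X₁(0) + X₂(0) + (η − F₁ − F₂)·t for all t ≥ 0; in particular X₁(t) + X₂(t) → ∞ as t → ∞. -/

import Mathlib

open Real Set MeasureTheory Filter

/-- Inflow function `μ_k(s, x)` for modes `s ∈ {1,2,3,4}` (indexed `0..3`) and links
`k ∈ {1,2}` (indexed `0..1`). -/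
noncomputable def mu (β η : ℝ) (s : Fin 4) (k : Fin 2) (x : ℝ × ℝ) : ℝ :=
  match s.val, k.val with
  | 0, 0 => η * Real.exp (-β * x.1) / (Real.exp (-β * x.1) + Real.exp (-β * x.2))
  | 0, _ => η * Real.exp (-β * x.2) / (Real.exp (-β * x.1) + Real.exp (-β * x.2))
  | 1, 0 => η / (1 + Real.exp (-β * x.2))
  | 1, _ => η * Real.exp (-β * x.2) / (1 + Real.exp (-β * x.2))
  | 2, 0 => η * Real.exp (-β * x.1) / (Real.exp (-β * x.1) + 1)
  | 2, _ => η / (Real.exp (-β * x.1) + 1)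
  | _, _ => η / 2

/-- Outflow (sending) function `f_k(y) = F_k (1 - e^{-y})` of link `k`. -/
noncomputable def fOut (F : Fin 2 → ℝ) (k : Fin 2) (y : ℝ) : ℝ :=
  F k * (1 - Real.exp (-y))

/-- The mode-`s` vector field `G(s,x) = (μ₁(s,x) − f₁(x₁), μ₂(s,x) − f₂(x₂))`. -/
noncomputable def Gvec (β η : ℝ) (F : Fin 2 → ℝ) (s : Fin 4) (x : ℝ × ℝ) : ℝ × ℝ :=
  (mu β η s 0 x - fOut F 0 x.1, mu β η s 1 x - fOut F 1 x.2)

/-- The `k`-th coordinate of `x ∈ ℝ²`. -/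
def coord (x : ℝ × ℝ) (k : Fin 2) : ℝ := if k = 0 then x.1 else x.2

/-- The two inflows always sum to the total demand `η`. -/
lemma mu_sum (β η : ℝ) (s : Fin 4) (x : ℝ × ℝ) :
    mu β η s 0 x + mu β η s 1 x = η := by
  have h1 : (0:ℝ) < Real.exp (-β * x.1) := Real.exp_pos _
  have h2 : (0:ℝ) < Real.exp (-β * x.2) := Real.exp_pos _
  fin_cases s <;> simp only [mu, Fin.val_zero, Fin.val_one] <;> field_simp <;> ring

/-- Each inflow is nonnegative. -/
lemma mu_nonneg (β η : ℝ) (hη : 0 ≤ η) (s : Fin 4) (k : Fin 2) (x : ℝ × ℝ) :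
    0 ≤ mu β η s k x := by
  have h1 : (0:ℝ) < Real.exp (-β * x.1) := Real.exp_pos _
  have h2 : (0:ℝ) < Real.exp (-β * x.2) := Real.exp_pos _
  fin_cases s <;> fin_cases k <;> simp only [mu] <;> positivity

/-- Each inflow is at most `η`. -/
lemma mu_le (β η : ℝ) (hη : 0 ≤ η) (s : Fin 4) (k : Fin 2) (x : ℝ × ℝ) :
    mu β η s k x ≤ η := by
  have h1 : (0:ℝ) < Real.exp (-β * x.1) := Real.exp_pos _
  have h2 : (0:ℝ) < Real.exp (-β * x.2) := Real.exp_pos _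
  fin_cases s <;> fin_cases k <;> simp only [mu] <;>
    rw [div_le_iff₀ (by positivity)] <;> nlinarith

/-- The outflow is bounded: `0 ≤ f_k(y) ≤ F_k` for `y ≥ 0`. -/
lemma fOut_bounds {F : Fin 2 → ℝ} (hF : ∀ k, 0 < F k) (k : Fin 2) {y : ℝ} (hy : 0 ≤ y) :
    0 ≤ fOut F k y ∧ fOut F k y ≤ F k := by
  have h1 : Real.exp (-y) ≤ 1 := Real.exp_le_one_iff.2 (by linarith)
  have h2 : (0:ℝ) < Real.exp (-y) := Real.exp_pos _
  simp only [fOut]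
  constructor
  · exact mul_nonneg (hF k).le (by linarith)
  · nlinarith [hF k]

lemma mu_continuous (β η : ℝ) (s : Fin 4) (k : Fin 2) :
    Continuous (fun x : ℝ × ℝ => mu β η s k x) := by
  have h1 : ∀ x : ℝ × ℝ, (0:ℝ) < Real.exp (-β * x.1) := fun x => Real.exp_pos _
  have h2 : ∀ x : ℝ × ℝ, (0:ℝ) < Real.exp (-β * x.2) := fun x => Real.exp_pos _
  fin_cases s <;> fin_cases k <;> simp only [mu] <;>
    exact Continuous.div (by fun_prop) (by fun_prop)
      (fun x => by have := h1 x; have := h2 x; positivity)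

lemma Gvec_continuous (β η : ℝ) (F : Fin 2 → ℝ) (s : Fin 4) :
    Continuous (fun x : ℝ × ℝ => Gvec β η F s x) := by
  unfold Gvec fOut
  exact Continuous.prodMk
    ((mu_continuous β η s 0).sub (by fun_prop))
    ((mu_continuous β η s 1).sub (by fun_prop))

/-- if the demand exceeds the network capacity, `η > F₁ + F₂`, then every
trajectory of the switched dynamics in the nonnegative orthant grows at least linearly:
`X₁(t) + X₂(t) ≥ X₁(0) + X₂(0) + (η − F₁ − F₂) t`, hence `X₁(t) + X₂(t) → ∞`. -/
theorem stmt17 (β η : ℝ) (F : Fin 2 → ℝ) (hβ : 0 < β) (hη : 0 < η)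
    (hF : ∀ k, 0 < F k) (hcap : η > F 0 + F 1)
    (σ : ℝ → Fin 4) (hσ : Measurable σ)
    (X : ℝ → ℝ × ℝ) (hXcont : ContinuousOn X (Set.Ici (0 : ℝ)))
    (hXnn : ∀ t : ℝ, 0 ≤ t → X t ∈ Set.Ici (0 : ℝ) ×ˢ Set.Ici (0 : ℝ))
    (hXeq : ∀ t : ℝ, 0 ≤ t → X t = X 0 + ∫ τ in (0 : ℝ)..t, Gvec β η F (σ τ) (X τ)) :
    (∀ t : ℝ, 0 ≤ t →
      (X t).1 + (X t).2 ≥ (X 0).1 + (X 0).2 + (η - F 0 - F 1) * t) ∧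
    Filter.Tendsto (fun t : ℝ => (X t).1 + (X t).2) Filter.atTop Filter.atTop := by
  set g : ℝ → ℝ × ℝ := fun τ => Gvec β η F (σ τ) (X τ) with hg
  -- measurability of the uncurried vector field
  have hGmeas : Measurable (fun p : (ℝ × ℝ) × Fin 4 => Gvec β η F p.2 p.1) := by
    apply measurable_from_prod_countable_left
    intro s
    exact (Gvec_continuous β η F s).measurable
  -- integrability of g on [0, t] for t ≥ 0
  have hgint : ∀ t : ℝ, 0 ≤ t → IntervalIntegrable g volume 0 t := by
    intro t ht
    rw [intervalIntegrable_iff_integrableOn_Ioc_of_le ht]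
    have hXm : AEMeasurable X (volume.restrict (Set.Ioc (0:ℝ) t)) :=
      (hXcont.mono (fun τ hτ => le_of_lt hτ.1)).aemeasurable measurableSet_Ioc
    have hgm : AEMeasurable g (volume.restrict (Set.Ioc (0:ℝ) t)) :=
      hGmeas.comp_aemeasurable (hXm.prodMk hσ.aemeasurable)
    apply Integrable.mono' (integrable_const (η + F 0 + F 1)) hgm.aestronglyMeasurable
    filter_upwards [ae_restrict_mem measurableSet_Ioc] with τ hτ
    have hXτ := hXnn τ (le_of_lt hτ.1)
    have hx1 : 0 ≤ (X τ).1 := hXτ.1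
    have hx2 : 0 ≤ (X τ).2 := hXτ.2
    have hf0 := fOut_bounds hF 0 hx1
    have hf1 := fOut_bounds hF 1 hx2
    have hm0 := mu_nonneg β η hη.le (σ τ) 0 (X τ)
    have hm0' := mu_le β η hη.le (σ τ) 0 (X τ)
    have hm1 := mu_nonneg β η hη.le (σ τ) 1 (X τ)
    have hm1' := mu_le β η hη.le (σ τ) 1 (X τ)
    rw [Prod.norm_def]
    have hF0 := hF 0; have hF1 := hF 1
    apply max_le <;> rw [Real.norm_eq_abs, abs_le] <;>
      constructor <;> simp only [hg, Gvec] <;> linarith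
  have key : ∀ t : ℝ, 0 ≤ t →
      (X t).1 + (X t).2 ≥ (X 0).1 + (X 0).2 + (η - F 0 - F 1) * t := by
    intro t ht
    have hInt := hgint t ht
    -- components of g are interval integrable
    have h1 : IntervalIntegrable (fun τ => (g τ).1) volume 0 t := by
      rw [intervalIntegrable_iff_integrableOn_Ioc_of_le ht] at hInt ⊢
      exact (ContinuousLinearMap.fst ℝ ℝ ℝ).integrable_comp hInt
    have h2 : IntervalIntegrable (fun τ => (g τ).2) volume 0 t := by
      rw [intervalIntegrable_iff_integrableOn_Ioc_of_le ht] at hInt ⊢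
      exact (ContinuousLinearMap.snd ℝ ℝ ℝ).integrable_comp hInt
    have hXt := hXeq t ht
    have e1 : (X t).1 = (X 0).1 + ∫ τ in (0:ℝ)..t, (g τ).1 := by
      have h := (ContinuousLinearMap.fst ℝ ℝ ℝ).intervalIntegral_comp_comm hInt
      rw [hXt, Prod.fst_add]
      congr 1
      exact h.symm
    have e2 : (X t).2 = (X 0).2 + ∫ τ in (0:ℝ)..t, (g τ).2 := by
      have h := (ContinuousLinearMap.snd ℝ ℝ ℝ).intervalIntegral_comp_comm hInt
      rw [hXt, Prod.snd_add]
      congr 1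
      exact h.symm
    have hsum : (X t).1 + (X t).2
        = (X 0).1 + (X 0).2 + ∫ τ in (0:ℝ)..t, ((g τ).1 + (g τ).2) := by
      rw [e1, e2, intervalIntegral.integral_add h1 h2]; ring
    have hlow : (η - F 0 - F 1) * t ≤ ∫ τ in (0:ℝ)..t, ((g τ).1 + (g τ).2) := by
      have hmono := intervalIntegral.integral_mono_on (μ := volume) ht
        (intervalIntegrable_const (c := η - F 0 - F 1)) (h1.add h2)
        (fun τ hτ => by
          have hXτ := hXnn τ hτ.1
          have hf0 := (fOut_bounds hF 0 hXτ.1).2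
          have hf1 := (fOut_bounds hF 1 hXτ.2).2
          have hmsum := mu_sum β η (σ τ) (X τ)
          simp only [hg, Gvec]
          linarith)
      rwa [intervalIntegral.integral_const, smul_eq_mul, sub_zero, mul_comm] at hmono
    rw [hsum]
    linarith
  refine ⟨key, ?_⟩
  · apply Filter.tendsto_atTop_mono' Filter.atTop
      (f₁ := fun t => (X 0).1 + (X 0).2 + (η - F 0 - F 1) * t)
    · filter_upwards [Filter.eventually_ge_atTop (0:ℝ)] with t ht
      exact key t ht
    · apply Filter.tendsto_atTop_add_const_left
      exact Filter.Tendsto.const_mul_atTop (by linarith) Filter.tendsto_id
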